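/- Let L : ℝ^V → ℝ be differentiable and μ-strongly convex for some μ > 0, let Φ : ℝ^V → ℝ be convex, normalized (Φ(0) = 0), absolute (Φ(w) = Φ(|w|)) and monotone (|w| ≤ |w'| coordinatewise implies Φ(w) ≤ Φ(w')), and let λ > 0. For each z ∈ ℝ^V the function w ↦ L(w) − ⟨z, w⟩ + λ Φ(w) has a unique minimizer h(z). Then the set { z ∈ ℝ^V : Φ is not decomposable at h(z) with respect to supp(h(z)) } has Lebesgue measure zero; in particular, for Lebesgue-almost-every z the support of h(z) is weakly stable with respect to Φ. -/

import Mathlib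

open scoped BigOperators
open MeasureTheory

/-- `Φ` is decomposable at `w` with respect to `J`. -/
def Decomposable {V : Type*} [Fintype V] (Φ : (V → ℝ) → ℝ) (w : V → ℝ) (J : Finset V) : Prop :=
  ∃ M : ℝ, 0 < M ∧ ∀ Δ : V → ℝ, (∀ i ∈ J, Δ i = 0) →
    Φ w + M * (⨆ i, |Δ i|) ≤ Φ (w + Δ)

/-- `J` is weakly stable with respect to `Φ`. -/
def WeaklyStable {V : Type*} [Fintype V] [DecidableEq V]
    (Φ : (V → ℝ) → ℝ) (J : Finset V) : Prop :=
  ∃ w : V → ℝ, Finset.univ.filter (fun i => w i ≠ 0) = J ∧ Decomposable Φ w J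


lemma aux_strong_min {V : Type*} [Fintype V]
    (L : (V → ℝ) → ℝ) (μ : ℝ) (hμ : 0 < μ)
    (hLsc : ConvexOn ℝ Set.univ (fun w : V → ℝ => L w - (μ / 2) * ∑ i, (w i) ^ 2))
    (Φ : (V → ℝ) → ℝ) (hΦ : ConvexOn ℝ Set.univ Φ)
    (lam : ℝ) (hlam : 0 < lam)
    (z u : V → ℝ)
    (hu : ∀ w' : V → ℝ, L u - (∑ i, z i * u i) + lam * Φ u
        ≤ L w' - (∑ i, z i * w' i) + lam * Φ w')
    (w : V → ℝ) :
    L u - (∑ i, z i * u i) + lam * Φ u + μ / 2 * ∑ i, (w i - u i) ^ 2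
      ≤ L w - (∑ i, z i * w i) + lam * Φ w := by
  set D := ∑ i, (w i - u i) ^ 2 with hDdef
  have hD : 0 ≤ D := Finset.sum_nonneg fun i _ => sq_nonneg _
  have key : ∀ s : ℝ, s ∈ Set.Ioo (0 : ℝ) 1 →
      L u - (∑ i, z i * u i) + lam * Φ u + μ / 2 * ((1 - s) * D)
        ≤ L w - (∑ i, z i * w i) + lam * Φ w := by
    intro s hs
    obtain ⟨hs0, hs1⟩ := hs
    set ws : V → ℝ := (1 - s) • u + s • w with hwsdef
    have hws : ∀ i, ws i = (1 - s) * u i + s * w i := fun i => rfl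
    have hL' := hLsc.2 (Set.mem_univ u) (Set.mem_univ w)
      (show (0:ℝ) ≤ 1 - s by linarith) hs0.le (by ring)
    have hΦ' := hΦ.2 (Set.mem_univ u) (Set.mem_univ w) (by linarith : (0:ℝ) ≤ 1 - s) hs0.le
      (by ring)
    have hmin' := hu ws
    simp only [smul_eq_mul] at hL' hΦ'
    -- sums
    have hsum1 : ∑ i, z i * ws i = (1 - s) * (∑ i, z i * u i) + s * (∑ i, z i * w i) := by
      rw [Finset.mul_sum, Finset.mul_sum, ← Finset.sum_add_distrib]
      exact Finset.sum_congr rfl fun i _ => by rw [hws i]; ring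
    have hsum2 : ∑ i, (ws i) ^ 2
        = (1 - s) * (∑ i, (u i) ^ 2) + s * (∑ i, (w i) ^ 2) - s * (1 - s) * D := by
      rw [hDdef, Finset.mul_sum, Finset.mul_sum, Finset.mul_sum,
        ← Finset.sum_add_distrib, ← Finset.sum_sub_distrib]
      exact Finset.sum_congr rfl fun i _ => by rw [hws i]; ring
    rw [hsum2] at hL'
    rw [hsum1] at hmin'
    have hΦlam : lam * Φ ws ≤ lam * ((1 - s) * Φ u + s * Φ w) :=
      mul_le_mul_of_nonneg_left hΦ' hlam.le
    have hineq : s * (L u - (∑ i, z i * u i) + lam * Φ u + μ / 2 * ((1 - s) * D))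
        ≤ s * (L w - (∑ i, z i * w i) + lam * Φ w) := by
      nlinarith [hL', hmin', hΦlam]
    exact le_of_mul_le_mul_left hineq hs0
  have htend : Filter.Tendsto
      (fun s : ℝ => L u - (∑ i, z i * u i) + lam * Φ u + μ / 2 * ((1 - s) * D))
      (nhdsWithin 0 (Set.Ioi 0))
      (nhds (L u - (∑ i, z i * u i) + lam * Φ u + μ / 2 * ((1 - 0) * D))) := by
    apply Filter.Tendsto.mono_left _ nhdsWithin_le_nhds
    exact (Continuous.tendsto (by continuity) 0)
  have hev : ∀ᶠ s in nhdsWithin (0:ℝ) (Set.Ioi 0),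
      L u - (∑ i, z i * u i) + lam * Φ u + μ / 2 * ((1 - s) * D)
        ≤ L w - (∑ i, z i * w i) + lam * Φ w := by
    filter_upwards [Ioo_mem_nhdsGT_of_mem (Set.left_mem_Ico.2 one_pos)] with s hs
    exact key s hs
  have hfinal := le_of_tendsto htend hev
  simpa using hfinal

section
variable {V : Type*} [Fintype V]
  (L : (V → ℝ) → ℝ) (μ : ℝ)
  (Φ : (V → ℝ) → ℝ) (lam : ℝ)

lemma aux_mono (hμ : 0 < μ)
    (hLsc : ConvexOn ℝ Set.univ (fun w : V → ℝ => L w - (μ / 2) * ∑ i, (w i) ^ 2))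
    (hΦ : ConvexOn ℝ Set.univ Φ) (hlam : 0 < lam)
    (h : (V → ℝ) → (V → ℝ))
    (hmin : ∀ z w : V → ℝ,
      L (h z) - (∑ i, z i * h z i) + lam * Φ (h z) ≤ L w - (∑ i, z i * w i) + lam * Φ w)
    (z z' : V → ℝ) :
    μ * ∑ i, (h z' i - h z i) ^ 2 ≤ ∑ i, (z' i - z i) * (h z' i - h z i) := by
  have h1 := aux_strong_min L μ hμ hLsc Φ hΦ lam hlam z (h z) (hmin z) (h z')
  have h2 := aux_strong_min L μ hμ hLsc Φ hΦ lam hlam z' (h z') (hmin z') (h z)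
  have hsymm : ∑ i, (h z i - h z' i) ^ 2 = ∑ i, (h z' i - h z i) ^ 2 :=
    Finset.sum_congr rfl fun i _ => by ring
  rw [hsymm] at h2
  have hexp : ∑ i, (z' i - z i) * (h z' i - h z i)
      = ((∑ i, z' i * h z' i) - ∑ i, z' i * h z i)
        - ((∑ i, z i * h z' i) - ∑ i, z i * h z i) := by
    rw [← Finset.sum_sub_distrib, ← Finset.sum_sub_distrib, ← Finset.sum_sub_distrib]
    exact Finset.sum_congr rfl fun i _ => by ring
  rw [hexp]
  linarith
end

section
variable {V : Type*} [Fintype V]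
  (L : (V → ℝ) → ℝ) (μ : ℝ)
  (Φ : (V → ℝ) → ℝ) (lam : ℝ)

lemma aux_cont (hμ : 0 < μ)
    (hLsc : ConvexOn ℝ Set.univ (fun w : V → ℝ => L w - (μ / 2) * ∑ i, (w i) ^ 2))
    (hΦ : ConvexOn ℝ Set.univ Φ) (hlam : 0 < lam)
    (h : (V → ℝ) → (V → ℝ))
    (hmin : ∀ z w : V → ℝ,
      L (h z) - (∑ i, z i * h z i) + lam * Φ (h z) ≤ L w - (∑ i, z i * w i) + lam * Φ w) :
    Continuous h := by
  have key : ∀ z z' : V → ℝ, ∀ i,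
      (h z' i - h z i) ^ 2 ≤ (Fintype.card V : ℝ) / μ ^ 2 * dist z' z ^ 2 := by
    intro z z' i
    have hm := aux_mono L μ Φ lam hμ hLsc hΦ hlam h hmin z z'
    set S := ∑ j, (h z' j - h z j) ^ 2 with hSdef
    have hS0 : 0 ≤ S := Finset.sum_nonneg fun j _ => sq_nonneg _
    have hterm : (h z' i - h z i) ^ 2 ≤ S :=
      Finset.single_le_sum (fun j _ => sq_nonneg (h z' j - h z j)) (Finset.mem_univ i)
    have hCS : (∑ j, (z' j - z j) * (h z' j - h z j)) ^ 2
        ≤ (∑ j, (z' j - z j) ^ 2) * S :=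
      Finset.sum_mul_sq_le_sq_mul_sq _ _ _
    have hT : ∑ j, (z' j - z j) ^ 2 ≤ (Fintype.card V : ℝ) * dist z' z ^ 2 := by
      have hb : ∀ j : V, (z' j - z j) ^ 2 ≤ dist z' z ^ 2 := by
        intro j
        have h1 : dist (z' j) (z j) ≤ dist z' z := dist_le_pi_dist z' z j
        rw [Real.dist_eq] at h1
        calc (z' j - z j) ^ 2 = |z' j - z j| ^ 2 := (sq_abs _).symm
          _ ≤ dist z' z ^ 2 := pow_le_pow_left₀ (abs_nonneg _) h1 2
      calc ∑ j, (z' j - z j) ^ 2 ≤ ∑ _j : V, dist z' z ^ 2 :=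
            Finset.sum_le_sum fun j _ => hb j
        _ = (Fintype.card V : ℝ) * dist z' z ^ 2 := by
            rw [Finset.sum_const, nsmul_eq_mul]; rfl
    rcases eq_or_lt_of_le hS0 with hS | hS
    · have : (h z' i - h z i) ^ 2 ≤ 0 := by rw [← hS] at hterm; exact hterm
      have hrhs : (0:ℝ) ≤ (Fintype.card V : ℝ) / μ ^ 2 * dist z' z ^ 2 := by positivity
      linarith
    · have h4 : (μ * S) ^ 2 ≤ (∑ j, (z' j - z j) ^ 2) * S := by
        have hms : 0 ≤ μ * S := mul_nonneg hμ.le hS0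
        have : (μ * S) ^ 2 ≤ (∑ j, (z' j - z j) * (h z' j - h z j)) ^ 2 :=
          pow_le_pow_left₀ hms hm 2
        exact this.trans hCS
      have h5 : μ ^ 2 * S ≤ ∑ j, (z' j - z j) ^ 2 := by
        have := h4
        have hS' : 0 < S := hS
        nlinarith
      have h6 : μ ^ 2 * S ≤ (Fintype.card V : ℝ) * dist z' z ^ 2 := h5.trans hT
      have hμ2 : 0 < μ ^ 2 := by positivity
      calc (h z' i - h z i) ^ 2 ≤ S := hterm
        _ ≤ (Fintype.card V : ℝ) / μ ^ 2 * dist z' z ^ 2 := by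
          rw [div_mul_eq_mul_div, le_div_iff₀ hμ2]
          nlinarith
  refine continuous_pi fun i => Metric.continuous_iff.2 fun z ε hε => ?_
  set C := (Fintype.card V : ℝ) / μ ^ 2 with hC
  have hC0 : 0 ≤ C := by positivity
  have hsC : 0 ≤ Real.sqrt C := Real.sqrt_nonneg C
  refine ⟨ε / (Real.sqrt C + 1), by positivity, fun z' hz' => ?_⟩
  have h1 : dist (h z' i) (h z i) ≤ Real.sqrt C * dist z' z := by
    rw [Real.dist_eq, ← Real.sqrt_sq_eq_abs]
    calc Real.sqrt ((h z' i - h z i) ^ 2) ≤ Real.sqrt (C * dist z' z ^ 2) :=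
          Real.sqrt_le_sqrt (key z z' i)
      _ = Real.sqrt C * dist z' z := by
          rw [Real.sqrt_mul hC0, Real.sqrt_sq dist_nonneg]
  have hδ : 0 < ε / (Real.sqrt C + 1) := by positivity
  have k1 : Real.sqrt C * dist z' z ≤ Real.sqrt C * (ε / (Real.sqrt C + 1)) :=
    mul_le_mul_of_nonneg_left hz'.le hsC
  have k2 : (Real.sqrt C + 1) * (ε / (Real.sqrt C + 1)) = ε := by field_simp
  nlinarith

lemma aux_line (hμ : 0 < μ)
    (hLsc : ConvexOn ℝ Set.univ (fun w : V → ℝ => L w - (μ / 2) * ∑ i, (w i) ^ 2))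
    (hΦ : ConvexOn ℝ Set.univ Φ) (hlam : 0 < lam)
    (h : (V → ℝ) → (V → ℝ))
    (hmin : ∀ z w : V → ℝ,
      L (h z) - (∑ i, z i * h z i) + lam * Φ (h z) ≤ L w - (∑ i, z i * w i) + lam * Φ w)
    (z z' : V → ℝ) (i : V) (hzz' : ∀ j, j ≠ i → z j = z' j)
    (hi : h z i = 0) (hi' : h z' i = 0) : h z = h z' := by
  have hm := aux_mono L μ Φ lam hμ hLsc hΦ hlam h hmin z z'
  have hzero : ∑ j, (z' j - z j) * (h z' j - h z j) = 0 :=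
    Finset.sum_eq_zero fun j _ => by
      by_cases hj : j = i
      · subst hj; rw [hi, hi']; ring
      · rw [hzz' j hj]; ring
  rw [hzero] at hm
  have hsum0 : ∑ j, (h z' j - h z j) ^ 2 = 0 :=
    le_antisymm (by nlinarith) (Finset.sum_nonneg fun j _ => sq_nonneg _)
  funext j
  have h7 := (Finset.sum_eq_zero_iff_of_nonneg
    (fun j _ => sq_nonneg (h z' j - h z j))).1 hsum0 j (Finset.mem_univ j)
  have h8 : h z' j - h z j = 0 := by
    exact (pow_eq_zero_iff two_ne_zero).1 h7
  linarith

end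

lemma aux_decomp {V : Type*} [Fintype V] [DecidableEq V]
    (L : (V → ℝ) → ℝ) (μ : ℝ) (hμ : 0 < μ)
    (hLdiff : Differentiable ℝ L)
    (Φ : (V → ℝ) → ℝ) (hΦ : ConvexOn ℝ Set.univ Φ)
    (hΦabs : ∀ w : V → ℝ, Φ w = Φ (fun i => |w i|))
    (hΦmono : ∀ w w' : V → ℝ, (∀ i, |w i| ≤ |w' i|) → Φ w ≤ Φ w')
    (lam : ℝ) (hlam : 0 < lam)
    (h : (V → ℝ) → (V → ℝ))
    (hmin : ∀ z w : V → ℝ,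
      L (h z) - (∑ i, z i * h z i) + lam * Φ (h z) ≤ L w - (∑ i, z i * w i) + lam * Φ w)
    (z : V → ℝ)
    (hgood : ∀ i, h z i = 0 → fderiv ℝ L (h z) (Pi.single i 1) ≠ z i) :
    Decomposable Φ (h z) (Finset.univ.filter (fun i => h z i ≠ 0)) := by
  classical
  set u := h z with hu
  -- evenness
  have heven : ∀ i, u i = 0 → ∀ t : ℝ,
      Φ (Function.update u i t) = Φ (Function.update u i |t|) := by
    intro i hi t
    rw [hΦabs (Function.update u i t), hΦabs (Function.update u i |t|)]
    congr 1
    funext j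
    by_cases hj : j = i
    · subst hj; simp
    · simp [Function.update_of_ne hj]
  -- optimality inequality
  have hopt : ∀ i, u i = 0 → ∀ v : ℝ,
      z i * v - (L (Function.update u i v) - L u)
        ≤ lam * (Φ (Function.update u i v) - Φ u) := by
    intro i hi v
    have hm := hmin z (Function.update u i v)
    rw [← hu] at hm
    have hsum : ∑ j, z j * (Function.update u i v) j = z i * v + ∑ j, z j * u j := by
      have e1 : (fun j => z j * Function.update u i v j)
          = Function.update (fun j => z j * u j) i (z i * v) := by
        funext j; by_cases hj : j = i
        · subst hj; simp
        · simp [Function.update_of_ne hj]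
      rw [show ∑ j, z j * (Function.update u i v) j
            = ∑ j, (fun j => z j * Function.update u i v j) j from rfl, e1,
        Finset.sum_update_of_mem (Finset.mem_univ i)]
      have e2 : ∑ j, z j * u j
          = z i * u i + ∑ j ∈ Finset.univ.erase i, z j * u j :=
        (Finset.add_sum_erase _ _ (Finset.mem_univ i)).symm
      rw [e2, hi, mul_zero, zero_add, Finset.sdiff_singleton_eq_erase]
    rw [hsum] at hm
    linarith
  -- growth
  have hgrow : ∀ i, u i = 0 → ∀ t : ℝ,
      Φ u + (|z i - fderiv ℝ L u (Pi.single i 1)| / lam) * |t|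
        ≤ Φ (Function.update u i t) := by
    intro i hi t
    rw [heven i hi t]
    set Di := fderiv ℝ L u (Pi.single i 1) with hDi
    set σ : ℝ := if 0 ≤ z i - Di then 1 else -1 with hσ
    have hσabs : σ * (z i - Di) = |z i - Di| := by
      rw [hσ]; split_ifs with hc
      · rw [one_mul, abs_of_nonneg hc]
      · rw [abs_of_neg (lt_of_not_ge hc)]; ring
    have hσ1 : |σ| = 1 := by
      rw [hσ]; split_ifs <;> simp
    rcases eq_or_lt_of_le (abs_nonneg t) with h0 | hpos
    · have hupd0 : Function.update u i |t| = u := by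
        rw [← h0, ← hi]; exact Function.update_eq_self i u
      rw [hupd0, ← h0, mul_zero, add_zero]
    · set t' := |t| with ht'
      set c : V → ℝ := σ • (Pi.single i (1:ℝ) : V → ℝ) with hc
      have hupd : ∀ r : ℝ, u + r • c = Function.update u i (σ * r) := by
        intro r; funext j; by_cases hj : j = i
        · subst hj
          simp [hc, hi, Function.update_self]
          ring
        · simp [hc, Function.update_of_ne hj, Pi.single_eq_of_ne hj]
      -- derivative along line
      have hline : HasDerivAt (fun r : ℝ => u + r • c) c 0 := by
        simpa using ((hasDerivAt_id (0 : ℝ)).smul_const c).const_add u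
      have h00 : u + (0 : ℝ) • c = u := by simp
      have hg : HasDerivAt (fun r : ℝ => L (u + r • c)) (fderiv ℝ L u c) 0 := by
        have hF : HasFDerivAt L (fderiv ℝ L u) (u + (0:ℝ) • c) := by
          rw [h00]; exact (hLdiff u).hasFDerivAt
        exact hF.comp_hasDerivAt 0 hline
      have hslopetend : Filter.Tendsto (fun s : ℝ => (L (u + s • c) - L u) / s)
          (nhdsWithin 0 (Set.Ioi 0)) (nhds (fderiv ℝ L u c)) := by
        have h1 := hasDerivAt_iff_tendsto_slope.1 hg
        have h2 := h1.mono_left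
          (nhdsWithin_mono (0:ℝ) (fun x (hx : x ∈ Set.Ioi (0:ℝ)) => ne_of_gt hx))
        apply h2.congr'
        filter_upwards [self_mem_nhdsWithin] with s hs
        rw [slope_def_field]
        rw [h00]
        rw [sub_zero]
      have hfc : fderiv ℝ L u c = σ * Di := by
        rw [hc, ContinuousLinearMap.map_smul, smul_eq_mul, ← hDi]
      have htend : Filter.Tendsto
          (fun s : ℝ => t' * (σ * z i - (L (u + s • c) - L u) / s))
          (nhdsWithin 0 (Set.Ioi 0)) (nhds (t' * (σ * z i - σ * Di))) := by
        rw [← hfc]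
        exact (Filter.Tendsto.const_sub _ hslopetend).const_mul t'
      have hev : ∀ᶠ s in nhdsWithin (0:ℝ) (Set.Ioi 0),
          t' * (σ * z i - (L (u + s • c) - L u) / s)
            ≤ lam * (Φ (Function.update u i t') - Φ u) := by
        filter_upwards [Ioc_mem_nhdsGT_of_mem (Set.left_mem_Ico.2 hpos)] with s hs
        obtain ⟨hs0, hst⟩ := hs
        have hσs : |σ * s| = s := by
          rw [abs_mul, hσ1, one_mul, abs_of_pos hs0]
        -- optimality at σ * s
        have ho := hopt i hi (σ * s)
        have hΦeq : Φ (Function.update u i (σ * s)) = Φ (Function.update u i s) := by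
          rw [heven i hi (σ * s), hσs]
        rw [hΦeq] at ho
        -- convexity
        have ht'0 : (0:ℝ) < t' := hpos
        have hst' : s / t' ≤ 1 := (div_le_one ht'0).2 hst
        have hpoint : (1 - s / t') • u + (s / t') • (Function.update u i t')
            = Function.update u i s := by
          funext j; by_cases hj : j = i
          · subst hj
            simp [hi, Function.update_self]
            field_simp
          · simp [Function.update_of_ne hj]
            ring
        have hcvx := hΦ.2 (Set.mem_univ u) (Set.mem_univ (Function.update u i t'))
          (show (0:ℝ) ≤ 1 - s / t' by linarith)
          (le_of_lt (div_pos hs0 ht'0)) (by ring)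
        rw [hpoint] at hcvx
        simp only [smul_eq_mul] at hcvx
        -- combine
        have h1 : z i * (σ * s) - (L (Function.update u i (σ * s)) - L u)
            ≤ lam * ((s / t') * (Φ (Function.update u i t') - Φ u)) := by
          have h2 : Φ (Function.update u i s) - Φ u
              ≤ (s / t') * (Φ (Function.update u i t') - Φ u) := by nlinarith
          have h3 := mul_le_mul_of_nonneg_left h2 hlam.le
          linarith
        have h4 := mul_le_mul_of_nonneg_left h1 (le_of_lt (div_pos ht'0 hs0))
        have e5 : (t' / s) * (z i * (σ * s) - (L (Function.update u i (σ * s)) - L u))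
            = t' * (σ * z i - (L (Function.update u i (σ * s)) - L u) / s) := by
          field_simp [ne_of_gt hs0, ne_of_gt ht'0]
        have e6 : (t' / s) * (lam * ((s / t') * (Φ (Function.update u i t') - Φ u)))
            = lam * (Φ (Function.update u i t') - Φ u) := by
          field_simp [ne_of_gt hs0, ne_of_gt ht'0]
        rw [e5, e6] at h4
        rw [← hupd s] at h4
        exact h4
      have hmain := le_of_tendsto htend hev
      have hmain' : t' * |z i - Di| ≤ lam * (Φ (Function.update u i t') - Φ u) := by
        rw [← hσabs]
        have e7 : t' * (σ * (z i - Di)) = t' * (σ * z i - σ * Di) := by ring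
        rw [e7]
        exact hmain
      have hX : lam * (|z i - Di| / lam * t') = t' * |z i - Di| := by
        field_simp
      nlinarith [hmain', hX, hlam]
  -- assemble
  by_cases hK : (Finset.univ.filter (fun i => u i = 0)).Nonempty
  · set m : V → ℝ := fun i => |z i - fderiv ℝ L u (Pi.single i 1)| / lam with hmdef
    refine ⟨(Finset.univ.filter (fun i => u i = 0)).inf' hK m, ?_, ?_⟩
    · rw [Finset.lt_inf'_iff]
      intro i hifil
      have hi := (Finset.mem_filter.1 hifil).2
      have habs : 0 < |z i - fderiv ℝ L u (Pi.single i 1)| :=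
        abs_pos.2 (sub_ne_zero.2 (Ne.symm (hgood i hi)))
      exact div_pos habs hlam
    · intro Δ hΔ
      rcases isEmpty_or_nonempty V with hV | hV
      · have huΔ : u + Δ = u := funext fun j => (hV.elim j)
        have hsup : (⨆ j, |Δ j|) = 0 := Real.iSup_of_isEmpty _
        rw [huΔ, hsup, mul_zero, add_zero]
      · obtain ⟨i₀, hi₀⟩ := Finite.exists_max (fun j => |Δ j|)
        have hTle : (⨆ j, |Δ j|) = |Δ i₀| :=
          le_antisymm (ciSup_le hi₀) (le_ciSup (f := fun j => |Δ j|) (Set.Finite.bddAbove (Set.finite_range _)) i₀)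
        rw [hTle]
        by_cases hΔ0 : Δ i₀ = 0
        · have hall : Δ = 0 := funext fun j => by
            have := hi₀ j
            rw [hΔ0, abs_zero] at this
            exact abs_eq_zero.1 (le_antisymm this (abs_nonneg _))
          rw [hall]; simp
        · have hu0 : u i₀ = 0 := by
            by_contra hne
            exact hΔ0 (hΔ i₀ (Finset.mem_filter.2 ⟨Finset.mem_univ _, hne⟩))
          have hmem : i₀ ∈ Finset.univ.filter (fun i => u i = 0) :=
            Finset.mem_filter.2 ⟨Finset.mem_univ _, hu0⟩
          have hMle : (Finset.univ.filter (fun i => u i = 0)).inf' hK m ≤ m i₀ :=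
            Finset.inf'_le m hmem
          have hgrow0 := hgrow i₀ hu0 (Δ i₀)
          have hmono0 : Φ (Function.update u i₀ (Δ i₀)) ≤ Φ (u + Δ) := by
            apply hΦmono
            intro j
            by_cases hj : j = i₀
            · subst hj
              rw [Function.update_self, Pi.add_apply, hu0, zero_add]
            · rw [Function.update_of_ne hj, Pi.add_apply]
              by_cases hΔj : Δ j = 0
              · rw [hΔj, add_zero]
              · have huj : u j = 0 := by
                  by_contra hne
                  exact hΔj (hΔ j (Finset.mem_filter.2 ⟨Finset.mem_univ _, hne⟩))
                rw [huj, zero_add, abs_zero]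
                exact abs_nonneg _
          have hmm : (Finset.univ.filter (fun i => u i = 0)).inf' hK m * |Δ i₀|
              ≤ m i₀ * |Δ i₀| := mul_le_mul_of_nonneg_right hMle (abs_nonneg _)
          have : m i₀ = |z i₀ - fderiv ℝ L u (Pi.single i₀ 1)| / lam := rfl
          linarith [hgrow0, hmono0, hmm]
  · refine ⟨1, one_pos, fun Δ hΔ => ?_⟩
    have hΔ0 : Δ = 0 := by
      funext j
      have hj : u j ≠ 0 := by
        intro hj0
        exact hK ⟨j, Finset.mem_filter.2 ⟨Finset.mem_univ j, hj0⟩⟩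
      exact hΔ j (Finset.mem_filter.2 ⟨Finset.mem_univ j, hj⟩)
    subst hΔ0
    rcases isEmpty_or_nonempty V with hV | hV
    · have hsup : (⨆ j, |(0 : V → ℝ) j|) = 0 := Real.iSup_of_isEmpty _
      rw [hsup, add_zero, mul_zero, add_zero]
    · have hsup : (⨆ j, |(0 : V → ℝ) j|) = 0 := by
        simp [ciSup_const]
      rw [hsup, add_zero, mul_zero, add_zero]

lemma aux_graph_null {V : Type*} [Fintype V] [DecidableEq V] (i : V) (B : Set (V → ℝ))
    (hB : MeasurableSet B)
    (hsec : ∀ z z' : V → ℝ, z ∈ B → z' ∈ B → (∀ j, j ≠ i → z j = z' j) → z = z') :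
    volume B = 0 := by
  classical
  set p : V → Prop := fun j => j ≠ i with hp
  let e := MeasurableEquiv.piEquivPiSubtypeProd (π := fun _ : V => ℝ) p
  have hmp := MeasureTheory.volume_preserving_piEquivPiSubtypeProd (fun _ : V => ℝ) p
  set S : Set ((∀ _ : {j // p j}, ℝ) × (∀ _ : {j // ¬p j}, ℝ)) := e.symm ⁻¹' B with hS
  have hSm : MeasurableSet S := e.symm.measurable hB
  have h1 : volume B = volume S := by
    have h2 : e ⁻¹' S = B := by
      rw [hS, ← Set.preimage_comp]
      have : (e.symm ∘ e) = id := by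
        funext x; exact e.symm_apply_apply x
      rw [this, Set.preimage_id]
    rw [← h2]
    exact hmp.measure_preimage hSm.nullMeasurableSet
  rw [h1, MeasureTheory.Measure.volume_eq_prod, MeasureTheory.Measure.measure_prod_null hSm]
  have hne : Nonempty {j // ¬ p j} := ⟨⟨i, fun hc => hc rfl⟩⟩
  refine Filter.Eventually.of_forall fun x => ?_
  have hsub : (Prod.mk x ⁻¹' S).Subsingleton := by
    intro y hy y' hy'
    have hz : e.symm (x, y) ∈ B := hy
    have hz' : e.symm (x, y') ∈ B := hy'
    have hcoord : ∀ j : V, j ≠ i → e.symm (x, y) j = e.symm (x, y') j := by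
      intro j hj
      have h3 : e.symm (x, y) j = x ⟨j, hj⟩ := by
        simp [e, MeasurableEquiv.piEquivPiSubtypeProd, Equiv.piEquivPiSubtypeProd_symm_apply,
          hp, hj]
      have h4 : e.symm (x, y') j = x ⟨j, hj⟩ := by
        simp [e, MeasurableEquiv.piEquivPiSubtypeProd, Equiv.piEquivPiSubtypeProd_symm_apply,
          hp, hj]
      rw [h3, h4]
    have heq := hsec _ _ hz hz' hcoord
    funext j
    obtain ⟨jv, hjp⟩ := j
    have h5 : e.symm (x, y) jv = y ⟨jv, hjp⟩ := by
      simp [e, MeasurableEquiv.piEquivPiSubtypeProd, Equiv.piEquivPiSubtypeProd_symm_apply,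
        hp, hjp, not_not.1 hjp]
    have h6 : e.symm (x, y') jv = y' ⟨jv, hjp⟩ := by
      simp [e, MeasurableEquiv.piEquivPiSubtypeProd, Equiv.piEquivPiSubtypeProd_symm_apply,
        hp, hjp, not_not.1 hjp]
    rw [← h5, ← h6, heq]
  simp only [Pi.zero_apply]
  exact hsub.measure_zero _

theorem stmt_4 {V : Type*} [Fintype V] [DecidableEq V]
    (L : (V → ℝ) → ℝ) (μ : ℝ) (hμ : 0 < μ)
    (hLdiff : Differentiable ℝ L)
    (hLsc : ConvexOn ℝ Set.univ (fun w : V → ℝ => L w - (μ / 2) * ∑ i, (w i) ^ 2))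
    (Φ : (V → ℝ) → ℝ) (hΦ : ConvexOn ℝ Set.univ Φ)
    (hΦ0 : Φ 0 = 0) (hΦabs : ∀ w : V → ℝ, Φ w = Φ (fun i => |w i|))
    (hΦmono : ∀ w w' : V → ℝ, (∀ i, |w i| ≤ |w' i|) → Φ w ≤ Φ w')
    (lam : ℝ) (hlam : 0 < lam)
    (h : (V → ℝ) → (V → ℝ))
    (hmin : ∀ z w : V → ℝ,
      L (h z) - (∑ i, z i * h z i) + lam * Φ (h z) ≤ L w - (∑ i, z i * w i) + lam * Φ w)
    (huniq : ∀ z w : V → ℝ,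
      (∀ w' : V → ℝ, L w - (∑ i, z i * w i) + lam * Φ w
          ≤ L w' - (∑ i, z i * w' i) + lam * Φ w') → w = h z) :
    volume { z : V → ℝ |
        ¬ Decomposable Φ (h z) (Finset.univ.filter (fun i => h z i ≠ 0)) } = 0 ∧
    ∀ᵐ z : V → ℝ, WeaklyStable Φ (Finset.univ.filter (fun i => h z i ≠ 0)) := by
  classical
  have hcont := aux_cont L μ Φ lam hμ hLsc hΦ hlam h hmin
  set Bad := { z : V → ℝ |
    ¬ Decomposable Φ (h z) (Finset.univ.filter (fun i => h z i ≠ 0)) } with hBadDef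
  set B : V → Set (V → ℝ) :=
    fun i => { z | h z i = 0 ∧ fderiv ℝ L (h z) (Pi.single i 1) = z i } with hBdef
  have hBsub : Bad ⊆ ⋃ i, B i := by
    intro z hz
    by_contra hnot
    apply hz
    apply aux_decomp L μ hμ hLdiff Φ hΦ hΦabs hΦmono lam hlam h hmin z
    intro i hi hceq
    exact hnot (Set.mem_iUnion.2 ⟨i, ⟨hi, hceq⟩⟩)
  have hBnull : ∀ i, volume (B i) = 0 := by
    intro i
    apply aux_graph_null i
    · have hm1 : Measurable fun z : V → ℝ => h z i :=
        ((continuous_apply i).comp hcont).measurable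
      have hm2 : Measurable fun z : V → ℝ =>
          fderiv ℝ L (h z) (Pi.single i 1) - z i :=
        ((measurable_fderiv_apply_const ℝ L (Pi.single i 1)).comp
          hcont.measurable).sub (measurable_pi_apply i)
      have hBeq : B i = (fun z : V → ℝ => h z i) ⁻¹' {0}
          ∩ (fun z : V → ℝ => fderiv ℝ L (h z) (Pi.single i 1) - z i) ⁻¹' {0} := by
        ext z
        simp [hBdef, sub_eq_zero]
      rw [hBeq]
      exact (hm1 (measurableSet_singleton 0)).inter (hm2 (measurableSet_singleton 0))
    · intro z z' hz hz' hagree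
      have h1 := aux_line L μ Φ lam hμ hLsc hΦ hlam h hmin z z' i hagree hz.1 hz'.1
      funext j
      by_cases hj : j = i
      · subst hj
        rw [← hz.2, ← hz'.2, h1]
      · exact hagree j hj
  have hnull : volume Bad = 0 := measure_mono_null hBsub (measure_iUnion_null hBnull)
  refine ⟨hnull, ?_⟩
  have hsub2 : { z : V → ℝ |
      ¬ WeaklyStable Φ (Finset.univ.filter (fun i => h z i ≠ 0)) } ⊆ Bad := by
    intro z hz hdec
    exact hz ⟨h z, rfl, hdec⟩
  exact (MeasureTheory.ae_iff).2 (measure_mono_null hsub2 hnull)
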